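/- Let Γ = (F_2 × ℤ) * ℤ be the free product of F_2 × ℤ with ℤ, where F_2 is the free group on two generators a_1, a_2. Write a_1, a_2 for the images in Γ of the generators of F_2 (included via the first factor), b for the image in Γ of the generator 1 of the ℤ-factor of F_2 × ℤ, and c for the image in Γ of the generator 1 of the second free factor ℤ. Let w = [[a_1, a_2], [b, c]]. Then w ≠ 1 in Γ, yet every group homomorphism φ : Γ → SL_2(ℂ) satisfies φ(w) = 1. In particular, Γ is not residually {SL_2(ℂ)}. -/

import Mathlib

/-- The group `Γ = (F₂ × ℤ) * ℤ`. -/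
abbrev GammaFP : Type :=
  Monoid.Coprod (FreeGroup (Fin 2) × Multiplicative ℤ) (Multiplicative ℤ)

/-- `a₁`, the image in `Γ` of the first generator of `F₂`. -/
def fpA1 : GammaFP := Monoid.Coprod.inl (FreeGroup.of 0, 1)

/-- `a₂`, the image in `Γ` of the second generator of `F₂`. -/
def fpA2 : GammaFP := Monoid.Coprod.inl (FreeGroup.of 1, 1)

/-- `b`, the image in `Γ` of the generator of the `ℤ`-factor of `F₂ × ℤ`. -/
def fpB : GammaFP := Monoid.Coprod.inl (1, Multiplicative.ofAdd 1)

/-- `c`, the image in `Γ` of the generator of the second free factor `ℤ`. -/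
def fpC : GammaFP := Monoid.Coprod.inr (Multiplicative.ofAdd 1)

open scoped commutatorElement

/-- The two free factors of `Γ`, as a family over `Bool`. -/
abbrev FPFac : Bool → Type := fun b =>
  cond b (FreeGroup (Fin 2) × Multiplicative ℤ) (Multiplicative ℤ)

instance : ∀ b, Group (FPFac b) := fun b => by
  cases b
  · exact (inferInstance : Group (Multiplicative ℤ))
  · exact (inferInstance : Group (FreeGroup (Fin 2) × Multiplicative ℤ))

instance : ∀ b, DecidableEq (FPFac b) := fun b => by
  cases b
  · exact (inferInstance : DecidableEq (Multiplicative ℤ))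
  · exact (inferInstance : DecidableEq (FreeGroup (Fin 2) × Multiplicative ℤ))

/-- Matrix lemma: anything commuting with a nonscalar 2×2 matrix is a polynomial in it. -/
lemma mem_span_of_commute {A B : Matrix (Fin 2) (Fin 2) ℂ}
    (hB : ∀ c : ℂ, B ≠ c • 1) (h : A * B = B * A) :
    ∃ α β : ℂ, A = α • 1 + β • B := by
  have h' : ∀ i j, (A * B) i j = (B * A) i j := fun i j => by rw [h]
  have e00 := h' 0 0
  have e01 := h' 0 1
  have e10 := h' 1 0
  have e11 := h' 1 1
  simp only [Matrix.mul_apply, Fin.sum_univ_two] at e00 e01 e10 e11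
  rcases ne_or_eq (B 0 1) 0 with hq | h01
  · refine ⟨A 0 0 - (A 0 1 / B 0 1) * B 0 0, A 0 1 / B 0 1, Matrix.ext fun i j => ?_⟩
    fin_cases i <;> fin_cases j <;>
      simp only [Matrix.add_apply, Matrix.smul_apply, Matrix.one_apply, smul_eq_mul,
        Fin.zero_eta, Fin.mk_one, Matrix.cons_val', Matrix.cons_val_zero, Matrix.cons_val_one,
        if_true, if_false, one_ne_zero, zero_ne_one, ite_true, ite_false, mul_one, mul_zero,
        add_zero, zero_add] <;>
      field_simp
    · ring
    · linear_combination -e00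
    · linear_combination -e01
  rcases ne_or_eq (B 1 0) 0 with hq | h10
  · refine ⟨A 0 0 - (A 1 0 / B 1 0) * B 0 0, A 1 0 / B 1 0, Matrix.ext fun i j => ?_⟩
    fin_cases i <;> fin_cases j <;>
      simp only [Matrix.add_apply, Matrix.smul_apply, Matrix.one_apply, smul_eq_mul,
        Fin.zero_eta, Fin.mk_one, Matrix.cons_val', Matrix.cons_val_zero, Matrix.cons_val_one,
        if_true, if_false, one_ne_zero, zero_ne_one, ite_true, ite_false, mul_one, mul_zero,
        add_zero, zero_add] <;>
      field_simp
    · ring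
    · linear_combination e00
    · linear_combination e10
  have hq : B 0 0 ≠ B 1 1 := by
    intro hd
    refine hB (B 1 1) ?_
    funext i j
    fin_cases i <;> fin_cases j <;>
      simp [Matrix.smul_apply, Matrix.one_apply, h01, h10, hd]
  have hsub : B 1 1 - B 0 0 ≠ 0 := sub_ne_zero.mpr (Ne.symm hq)
  have hsub' : B 0 0 - B 1 1 ≠ 0 := sub_ne_zero.mpr hq
  have hA01 : A 0 1 = 0 := by
    have h2 : A 0 1 * (B 1 1 - B 0 0) = 0 := by rw [h01] at e01; linear_combination e01
    exact (mul_eq_zero.mp h2).resolve_right hsub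
  have hA10 : A 1 0 = 0 := by
    have h2 : A 1 0 * (B 0 0 - B 1 1) = 0 := by rw [h10] at e10; linear_combination e10
    exact (mul_eq_zero.mp h2).resolve_right hsub'
  refine ⟨A 0 0 - ((A 0 0 - A 1 1) / (B 0 0 - B 1 1)) * B 0 0,
    (A 0 0 - A 1 1) / (B 0 0 - B 1 1), Matrix.ext fun i j => ?_⟩
  fin_cases i <;> fin_cases j <;>
    simp only [Matrix.add_apply, Matrix.smul_apply, Matrix.one_apply, smul_eq_mul,
      Fin.zero_eta, Fin.mk_one, Matrix.cons_val', Matrix.cons_val_zero, Matrix.cons_val_one,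
      if_true, if_false, one_ne_zero, zero_ne_one, ite_true, ite_false, mul_one, mul_zero,
      add_zero, zero_add, h01, h10, hA01, hA10] <;>
    field_simp <;> ring

lemma commute_of_commute_nonscalar {A1 A2 B : Matrix (Fin 2) (Fin 2) ℂ}
    (hB : ∀ c : ℂ, B ≠ c • 1) (h1 : A1 * B = B * A1) (h2 : A2 * B = B * A2) :
    A1 * A2 = A2 * A1 := by
  obtain ⟨α, β, rfl⟩ := mem_span_of_commute hB h1
  obtain ⟨γ, δ, rfl⟩ := mem_span_of_commute hB h2
  simp only [add_mul, mul_add, smul_mul_assoc, Matrix.mul_smul, Matrix.smul_mul, smul_smul,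
    one_mul, mul_one, mul_smul_comm]
  simp only [smul_add, smul_smul]
  rw [mul_comm γ α, mul_comm δ α, mul_comm γ β, mul_comm δ β]
  abel

-- test FreeGroup commutator nontrivial
example : (⁅FreeGroup.of (0 : Fin 2), FreeGroup.of 1⁆ : FreeGroup (Fin 2)) ≠ 1 := by decide


open Monoid

/-- Every homomorphism to `SL₂(ℂ)` kills the word `w`. -/
lemma phi_kills (φ : GammaFP →* Matrix.SpecialLinearGroup (Fin 2) ℂ) :
    φ ⁅⁅fpA1, fpA2⁆, ⁅fpB, fpC⁆⁆ = 1 := by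
  rw [map_commutatorElement, map_commutatorElement, map_commutatorElement]
  by_cases hs : ∃ c : ℂ, (φ fpB : Matrix (Fin 2) (Fin 2) ℂ) = c • 1
  · obtain ⟨c, hc⟩ := hs
    have hBC : φ fpB * φ fpC = φ fpC * φ fpB := by
      apply Subtype.ext
      rw [Matrix.SpecialLinearGroup.coe_mul, Matrix.SpecialLinearGroup.coe_mul, hc]
      rw [Matrix.smul_mul, Matrix.mul_smul, one_mul, mul_one]
    rw [commutatorElement_eq_one_iff_mul_comm.2 hBC, commutatorElement_one_right]
  · push_neg at hs
    have hcomm : ∀ x : FreeGroup (Fin 2) × Multiplicative ℤ,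
        φ (Coprod.inl x) * φ fpB = φ fpB * φ (Coprod.inl x) := by
      intro x
      have hin : (Coprod.inl x : GammaFP) * fpB = fpB * Coprod.inl x := by
        unfold fpB
        rw [← map_mul, ← map_mul]
        congr 1
        ext
        · simp
        · simp [mul_comm]
      rw [← map_mul, ← map_mul, hin]
    have h1 : (φ fpA1 : Matrix (Fin 2) (Fin 2) ℂ) * (φ fpB : Matrix (Fin 2) (Fin 2) ℂ)
        = (φ fpB : Matrix (Fin 2) (Fin 2) ℂ) * (φ fpA1 : Matrix (Fin 2) (Fin 2) ℂ) := by
      have := hcomm (FreeGroup.of 0, 1)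
      have h2 := congrArg (Subtype.val) this
      simpa [fpA1] using h2
    have h2 : (φ fpA2 : Matrix (Fin 2) (Fin 2) ℂ) * (φ fpB : Matrix (Fin 2) (Fin 2) ℂ)
        = (φ fpB : Matrix (Fin 2) (Fin 2) ℂ) * (φ fpA2 : Matrix (Fin 2) (Fin 2) ℂ) := by
      have := hcomm (FreeGroup.of 1, 1)
      have h2 := congrArg (Subtype.val) this
      simpa [fpA2] using h2
    have h12 : φ fpA1 * φ fpA2 = φ fpA2 * φ fpA1 := by
      apply Subtype.ext
      rw [Matrix.SpecialLinearGroup.coe_mul, Matrix.SpecialLinearGroup.coe_mul]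
      exact commute_of_commute_nonscalar (fun c => hs c) h1 h2
    rw [commutatorElement_eq_one_iff_mul_comm.2 h12, commutatorElement_one_left]

/-- Generator shorthand. -/
def fpT : Multiplicative ℤ := Multiplicative.ofAdd 1

def fpK : FreeGroup (Fin 2) := ⁅FreeGroup.of (0 : Fin 2), FreeGroup.of (1 : Fin 2)⁆

lemma fpK_ne_one : fpK ≠ 1 := by decide

lemma fpT_ne_one : fpT ≠ 1 := by decide

/-- The canonical map `Γ → CoprodI FPFac`. -/
def ψFP : GammaFP →* CoprodI FPFac :=
  Coprod.lift (CoprodI.of (M := FPFac) (i := true)) (CoprodI.of (M := FPFac) (i := false))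

/-- The reduced word representing `ψFP w`. -/
def fpWord : CoprodI.Word FPFac where
  toList := [⟨true, (fpK, fpT)⟩, ⟨false, fpT⟩, ⟨true, (1, fpT⁻¹)⟩, ⟨false, fpT⁻¹⟩,
    ⟨true, (fpK⁻¹, 1)⟩, ⟨false, fpT⟩, ⟨true, (1, fpT)⟩, ⟨false, fpT⁻¹⟩, ⟨true, (1, fpT⁻¹)⟩]
  ne_one := by
    intro l hl
    have hk := fpK_ne_one
    have ht := fpT_ne_one
    simp only [List.mem_cons, List.not_mem_nil, or_false] at hl
    rcases hl with rfl | rfl | rfl | rfl | rfl | rfl | rfl | rfl | rfl <;>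
      simp only [ne_eq, Prod.mk_eq_one, inv_eq_one, not_and] <;>
      simp_all
  chain_ne := by
    simp [List.isChain_cons_cons]

lemma prod_fpWord : fpWord.prod = ψFP ⁅⁅fpA1, fpA2⁆, ⁅fpB, fpC⁆⁆ := by
  have hXcomm : ⁅((FreeGroup.of 0, 1) : FreeGroup (Fin 2) × Multiplicative ℤ),
      ((FreeGroup.of 1, 1) : FreeGroup (Fin 2) × Multiplicative ℤ)⁆ = (fpK, 1) := by
    ext
    · simp [commutatorElement_def, fpK, Prod.fst_mul, Prod.fst_inv]
    · simp [commutatorElement_def, Prod.snd_mul, Prod.snd_inv]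
  rw [map_commutatorElement, map_commutatorElement, map_commutatorElement]
  show _ = ⁅⁅ψFP fpA1, ψFP fpA2⁆, ⁅ψFP fpB, ψFP fpC⁆⁆
  have hA1 : ψFP fpA1 = CoprodI.of (M := FPFac) (i := true) (FreeGroup.of 0, 1) :=
    Coprod.lift_apply_inl _ _ _
  have hA2 : ψFP fpA2 = CoprodI.of (M := FPFac) (i := true) (FreeGroup.of 1, 1) :=
    Coprod.lift_apply_inl _ _ _
  have hB : ψFP fpB = CoprodI.of (M := FPFac) (i := true) ((1 : FreeGroup (Fin 2)), fpT) :=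
    Coprod.lift_apply_inl _ _ _
  have hC : ψFP fpC = CoprodI.of (M := FPFac) (i := false) fpT :=
    Coprod.lift_apply_inr _ _ _
  rw [hA1, hA2, hB, hC, ← map_commutatorElement, hXcomm]
  show (CoprodI.of (M := FPFac) (i := true) (fpK, fpT)) *
      (CoprodI.of (M := FPFac) (i := false) fpT) *
      (CoprodI.of (M := FPFac) (i := true) ((1 : FreeGroup (Fin 2)), fpT⁻¹)) *
      (CoprodI.of (M := FPFac) (i := false) fpT⁻¹) *
      (CoprodI.of (M := FPFac) (i := true) (fpK⁻¹, 1)) *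
      (CoprodI.of (M := FPFac) (i := false) fpT) *
      (CoprodI.of (M := FPFac) (i := true) ((1 : FreeGroup (Fin 2)), fpT)) *
      (CoprodI.of (M := FPFac) (i := false) fpT⁻¹) *
      (CoprodI.of (M := FPFac) (i := true) ((1 : FreeGroup (Fin 2)), fpT⁻¹)) = _
  have e1 : ((fpK, fpT) : FreeGroup (Fin 2) × Multiplicative ℤ) = (fpK, 1) * (1, fpT) := by
    ext <;> simp
  have e2 : (((1 : FreeGroup (Fin 2)), fpT⁻¹) : FreeGroup (Fin 2) × Multiplicative ℤ)
      = ((1 : FreeGroup (Fin 2)), fpT)⁻¹ := by ext <;> simp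
  have e3 : ((fpK⁻¹, 1) : FreeGroup (Fin 2) × Multiplicative ℤ) = ((fpK, 1) :
      FreeGroup (Fin 2) × Multiplicative ℤ)⁻¹ := by ext <;> simp
  rw [e1, e2, e3, map_mul, map_inv, map_inv, map_inv]
  simp only [commutatorElement_def]
  group

/-- The word `w` is nontrivial in `Γ`. -/
lemma w_ne_one : ⁅⁅fpA1, fpA2⁆, ⁅fpB, fpC⁆⁆ ≠ (1 : GammaFP) := by
  intro h
  have h1 : fpWord.prod = CoprodI.Word.empty.prod := by
    rw [CoprodI.Word.prod_empty, prod_fpWord, h, map_one]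
  have h2 : fpWord = CoprodI.Word.empty :=
    (CoprodI.Word.equiv (M := FPFac)).symm.injective h1
  have h3 := congrArg CoprodI.Word.toList h2
  simp [fpWord, CoprodI.Word.empty] at h3

/-- In `Γ = (F₂ × ℤ) * ℤ`, the element `w = [[a₁,a₂],[b,c]]` is nontrivial but is killed
by every homomorphism to `SL_2(ℂ)`; in particular `Γ` is not residually `{SL_2(ℂ)}`. -/
theorem freeProduct_not_residually_SL2 :
    ⁅⁅fpA1, fpA2⁆, ⁅fpB, fpC⁆⁆ ≠ 1 ∧
    (∀ φ : GammaFP →* Matrix.SpecialLinearGroup (Fin 2) ℂ,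
      φ ⁅⁅fpA1, fpA2⁆, ⁅fpB, fpC⁆⁆ = 1) ∧
    ¬ (∀ γ : GammaFP, γ ≠ 1 →
        ∃ φ : GammaFP →* Matrix.SpecialLinearGroup (Fin 2) ℂ, φ γ ≠ 1) := by
  refine ⟨w_ne_one, phi_kills, fun H => ?_⟩
  obtain ⟨φ, hφ⟩ := H _ w_ne_one
  exact hφ (phi_kills φ)
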